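/- Under the LOB pricing structure and Assumption 2, for every fixed price vector (q, q̄_1, ..., q̄_n) ∈ Q̂ := {(q,q̄) ∈ (0,1] × (0,1]^n : q < q̄_i for all i}, there exists a unique Nash equilibrium liquidation vector s̄(q, q̄_1,...,q̄_n) ∈ D of problem (P2), i.e., a unique s̄ ∈ D such that s̄_i is an optimal solution of bank i's problem (P2) given s̄_{-i} for every i. -/

import Mathlib

noncomputable section

/-- The domain `D = ∏ [0, aᵢ]` of admissible liquidation vectors. -/
def memD (n : ℕ) (a s : Fin n → ℝ) : Prop := ∀ i, s i ∈ Set.Icc 0 (a i)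

/-- Bank `i`'s cost: realized loss from sales plus interest on the borrowed amount. -/
def obj (n : ℕ) (r : ℝ) (h : Fin n → ℝ) (fbar : Fin n → (Fin n → ℝ) → ℝ)
    (i : Fin n) (s : Fin n → ℝ) : ℝ :=
  s i * (1 - fbar i s) + r * (h i - s i * fbar i s)

/-- Feasibility in problem (P2) with fixed prices `(q, q̄)`. -/
def feasP2 (n : ℕ) (a h : Fin n → ℝ) (q : ℝ) (qb : Fin n → ℝ) (i : Fin n) (x : ℝ) : Prop :=
  x ∈ Set.Icc 0 (a i) ∧ x ≤ h i / qb i ∧ (h i - a i * q) / (qb i - q) ≤ x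

/-- `s` is a Nash equilibrium of problem (P2) at fixed prices `(q, q̄)`. -/
def NashP2 (n : ℕ) (a h : Fin n → ℝ) (r q : ℝ) (qb : Fin n → ℝ)
    (fbar : Fin n → (Fin n → ℝ) → ℝ) (s : Fin n → ℝ) : Prop :=
  ∀ i : Fin n,
    (h i ≤ a i * qb i →
      feasP2 n a h q qb i (s i) ∧
      ∀ x : ℝ, feasP2 n a h q qb i x →
        obj n r h fbar i s ≤ obj n r h fbar i (Function.update s i x)) ∧
    (a i * qb i < h i → s i = a i)

/-- Limit order book based price: all banks submit orders at the same rate, so when bank `i`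
has sold `u` units the total volume sold is `∑ⱼ min(sⱼ, u)`.  The average price obtained by
bank `i` is `(1/sᵢ) ∫₀^{sᵢ} f(∑ⱼ min(sⱼ,u)) du`, which coincides with the order-statistics
formula of the LOB pricing scheme. -/
def lob (n : ℕ) (f : ℝ → ℝ) : Fin n → (Fin n → ℝ) → ℝ := fun i s =>
  if s i = 0 then 1 else (∫ u in (0:ℝ)..(s i), f (∑ j, min (s j) u)) / s i

/-- Assumption 2 on the order book density `f : [0,M] → (0,1]`. -/
structure Assumption2 (M : ℝ) (f : ℝ → ℝ) : Prop where
  mem : ∀ x ∈ Set.Icc (0 : ℝ) M, f x ∈ Set.Ioc (0 : ℝ) 1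
  anti : StrictAntiOn f (Set.Icc 0 M)
  smooth : ContDiffOn ℝ 2 f (Set.Icc 0 M)
  f_zero : f 0 = 1
  deriv_mono : MonotoneOn (derivWithin f (Set.Icc 0 M)) (Set.Icc 0 M)


/- ### Auxiliary development ### -/

open Set Finset

variable {n : ℕ}

def Gfun (n : ℕ) (s : Fin n → ℝ) (i : Fin n) (u : ℝ) : ℝ :=
  u + ∑ j ∈ Finset.univ.erase i, min (s j) u

def Vfun (n : ℕ) (s : Fin n → ℝ) (u : ℝ) : ℝ := ∑ j, min (s j) u

lemma Gfun_self (s : Fin n → ℝ) (i : Fin n) : Gfun n s i (s i) = Vfun n s (s i) := by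
  rw [Gfun, Vfun, ← Finset.add_sum_erase _ _ (Finset.mem_univ i), min_self]

lemma Gfun_mono (s : Fin n → ℝ) (i : Fin n) {u v : ℝ} (huv : u ≤ v) :
    Gfun n s i u ≤ Gfun n s i v :=
  add_le_add huv (Finset.sum_le_sum fun _ _ => min_le_min le_rfl huv)

lemma Gfun_cont (s : Fin n → ℝ) (i : Fin n) : Continuous (Gfun n s i) :=
  continuous_id.add (continuous_finset_sum _ fun _ _ => continuous_const.min continuous_id)

lemma Gfun_mem {a : Fin n → ℝ} {M : ℝ} (hM : ∑ j, a j ≤ M) {s : Fin n → ℝ}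
    (hs : ∀ j, s j ∈ Icc 0 (a j)) (i : Fin n) {u : ℝ} (hu : u ∈ Icc 0 (a i)) :
    Gfun n s i u ∈ Icc (0:ℝ) M := by
  constructor
  · exact add_nonneg hu.1 (Finset.sum_nonneg fun j _ => le_min (hs j).1 hu.1)
  · calc Gfun n s i u ≤ a i + ∑ j ∈ Finset.univ.erase i, a j :=
        add_le_add hu.2 (Finset.sum_le_sum fun j _ => (min_le_left _ _).trans (hs j).2)
    _ = ∑ j, a j := Finset.add_sum_erase _ _ (Finset.mem_univ i)
    _ ≤ M := hM

lemma Vfun_mem {a : Fin n → ℝ} {M : ℝ} (hM : ∑ j, a j ≤ M) {s : Fin n → ℝ}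
    (hs : ∀ j, s j ∈ Icc 0 (a j)) {u : ℝ} (hu : 0 ≤ u) : Vfun n s u ∈ Icc (0:ℝ) M := by
  constructor
  · exact Finset.sum_nonneg fun j _ => le_min (hs j).1 hu
  · exact le_trans (Finset.sum_le_sum fun j _ => (min_le_left _ _).trans (hs j).2) hM

lemma Vfun_mono (s : Fin n → ℝ) {u v : ℝ} (huv : u ≤ v) : Vfun n s u ≤ Vfun n s v :=
  Finset.sum_le_sum fun _ _ => min_le_min le_rfl huv

lemma obj_update_eq (r : ℝ) (h : Fin n → ℝ) (f : ℝ → ℝ) (i : Fin n)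
    (s : Fin n → ℝ) {x : ℝ} (hx : 0 ≤ x) :
    obj n r h (lob n f) i (Function.update s i x)
      = x + r * h i - (1+r) * ∫ u in (0:ℝ)..x, f (Gfun n s i u) := by
  have hint : (∫ u in (0:ℝ)..x, f (∑ j, min (Function.update s i x j) u))
      = ∫ u in (0:ℝ)..x, f (Gfun n s i u) := by
    apply intervalIntegral.integral_congr
    intro u hu
    rw [Set.uIcc_of_le hx] at hu

    simp only [Gfun]
    rw [← Finset.add_sum_erase _ (fun j => min (Function.update s i x j) u)
      (Finset.mem_univ i), Function.update_self, min_eq_right hu.2]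
    exact congrArg f (congrArg (u + ·) (Finset.sum_congr rfl fun j hj => by
      rw [Function.update_of_ne (Finset.ne_of_mem_erase hj)]))
  rcases eq_or_lt_of_le hx with h0 | h0
  · simp only [obj, lob, Function.update_self, ← h0, if_pos rfl,
      intervalIntegral.integral_same]
    ring
  · have hx0 : x ≠ 0 := ne_of_gt h0
    simp only [obj, lob, Function.update_self, if_neg hx0, hint]
    field_simp
    ring

variable {a h : Fin n → ℝ} {r M : ℝ} {f : ℝ → ℝ}

lemma fG_contOn (hfC : ContinuousOn f (Icc 0 M)) (hM : ∑ j, a j ≤ M)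
    {s : Fin n → ℝ} (hs : ∀ j, s j ∈ Icc 0 (a j)) (i : Fin n) :
    ContinuousOn (fun u => f (Gfun n s i u)) (Icc 0 (a i)) :=
  hfC.comp (Gfun_cont s i).continuousOn fun _ hu => Gfun_mem hM hs i hu

lemma fG_intble (hfC : ContinuousOn f (Icc 0 M)) (hM : ∑ j, a j ≤ M)
    {s : Fin n → ℝ} (hs : ∀ j, s j ∈ Icc 0 (a j)) (i : Fin n)
    {x y : ℝ} (hxy : x ≤ y) (hx : 0 ≤ x) (hy : y ≤ a i) :
    IntervalIntegrable (fun u => f (Gfun n s i u)) MeasureTheory.volume x y := by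
  apply ContinuousOn.intervalIntegrable
  rw [Set.uIcc_of_le hxy]
  exact (fG_contOn hfC hM hs i).mono (Set.Icc_subset_Icc hx hy)

lemma obj_update_sub (r : ℝ) (h : Fin n → ℝ) (hfC : ContinuousOn f (Icc 0 M))
    (hM : ∑ j, a j ≤ M) {s : Fin n → ℝ} (hs : ∀ j, s j ∈ Icc 0 (a j)) (i : Fin n)
    {w x : ℝ} (h0w : 0 ≤ w) (hwx : w ≤ x) (hx : x ≤ a i) :
    obj n r h (lob n f) i (Function.update s i x)
      - obj n r h (lob n f) i (Function.update s i w)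
      = (x - w) - (1+r) * ∫ u in w..x, f (Gfun n s i u) := by
  have hsplit := intervalIntegral.integral_add_adjacent_intervals
    (fG_intble hfC hM hs i h0w le_rfl (hwx.trans hx))
    (fG_intble hfC hM hs i hwx h0w hx)
  rw [obj_update_eq r h f i s (h0w.trans hwx), obj_update_eq r h f i s h0w, ← hsplit]
  ring

lemma opt_above (hr : 0 ≤ r) (hfC : ContinuousOn f (Icc 0 M))
    (hfA : AntitoneOn f (Icc 0 M)) (hM : ∑ j, a j ≤ M)
    {s : Fin n → ℝ} (hs : ∀ j, s j ∈ Icc 0 (a j)) (i : Fin n)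
    (hkey : f (Vfun n s (s i)) ≤ (1+r)⁻¹) {x : ℝ} (hx1 : s i ≤ x) (hx2 : x ≤ a i) :
    obj n r h (lob n f) i s ≤ obj n r h (lob n f) i (Function.update s i x) := by
  have hr1 : (0:ℝ) < 1 + r := by linarith
  have hsi := hs i
  have hdiff := obj_update_sub (s := s) r h hfC hM hs i hsi.1 hx1 hx2
  rw [Function.update_eq_self] at hdiff
  have hb : ∫ u in (s i)..x, f (Gfun n s i u) ≤ (x - s i) * f (Vfun n s (s i)) := by
    have hmono := intervalIntegral.integral_mono_on (g := fun _ => f (Gfun n s i (s i)))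
      hx1 (fG_intble hfC hM hs i hx1 hsi.1 hx2) intervalIntegrable_const
      (fun u hu => hfA (Gfun_mem hM hs i ⟨hsi.1, hsi.2⟩)
        (Gfun_mem hM hs i ⟨hsi.1.trans hu.1, hu.2.trans hx2⟩) (Gfun_mono s i hu.1))
    rwa [intervalIntegral.integral_const, smul_eq_mul, Gfun_self] at hmono
  have h1 : (1+r) * ∫ u in (s i)..x, f (Gfun n s i u) ≤ (1+r) * ((x - s i) * ((1+r)⁻¹)) := by
    apply mul_le_mul_of_nonneg_left _ hr1.le
    exact le_trans hb (mul_le_mul_of_nonneg_left hkey (sub_nonneg.mpr hx1))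
  rw [mul_comm (x - s i), ← mul_assoc, mul_inv_cancel₀ (ne_of_gt hr1), one_mul] at h1
  linarith

lemma opt_below (hr : 0 ≤ r) (hfC : ContinuousOn f (Icc 0 M))
    (hfA : AntitoneOn f (Icc 0 M)) (hM : ∑ j, a j ≤ M)
    {s : Fin n → ℝ} (hs : ∀ j, s j ∈ Icc 0 (a j)) (i : Fin n)
    (hkey : (1+r)⁻¹ ≤ f (Vfun n s (s i))) {x : ℝ} (hx0 : 0 ≤ x) (hx2 : x ≤ s i) :
    obj n r h (lob n f) i s ≤ obj n r h (lob n f) i (Function.update s i x) := by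
  have hr1 : (0:ℝ) < 1 + r := by linarith
  have hsi := hs i
  have hdiff := obj_update_sub (s := s) r h hfC hM hs i hx0 hx2 hsi.2
  rw [Function.update_eq_self] at hdiff
  have hb : (s i - x) * f (Vfun n s (s i)) ≤ ∫ u in x..(s i), f (Gfun n s i u) := by
    have hmono := intervalIntegral.integral_mono_on (f := fun _ => f (Gfun n s i (s i)))
      hx2 intervalIntegrable_const (fG_intble hfC hM hs i hx2 hx0 hsi.2)
      (fun u hu => hfA (Gfun_mem hM hs i ⟨hx0.trans hu.1, hu.2.trans hsi.2⟩)
        (Gfun_mem hM hs i ⟨hsi.1, hsi.2⟩) (Gfun_mono s i hu.2))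
    rwa [intervalIntegral.integral_const, smul_eq_mul, Gfun_self] at hmono
  have h1 : (1+r) * ((s i - x) * ((1+r)⁻¹)) ≤ (1+r) * ∫ u in x..(s i), f (Gfun n s i u) := by
    apply mul_le_mul_of_nonneg_left _ hr1.le
    exact le_trans (mul_le_mul_of_nonneg_left hkey (sub_nonneg.mpr hx2)) hb
  rw [mul_comm (s i - x), ← mul_assoc, mul_inv_cancel₀ (ne_of_gt hr1), one_mul] at h1
  linarith

lemma nec_above (hr : 0 ≤ r) (hfC : ContinuousOn f (Icc 0 M))
    (hfA : AntitoneOn f (Icc 0 M)) (hM : ∑ j, a j ≤ M)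
    {s : Fin n → ℝ} (hs : ∀ j, s j ∈ Icc 0 (a j)) (i : Fin n)
    {u' : ℝ} (hu : s i < u') (hu2 : u' ≤ a i)
    (hopt : ∀ x ∈ Icc (s i) u',
      obj n r h (lob n f) i s ≤ obj n r h (lob n f) i (Function.update s i x)) :
    f (Vfun n s (s i)) ≤ (1+r)⁻¹ := by
  have hr1 : (0:ℝ) < 1 + r := by linarith
  have hsi := hs i
  have key : ∀ x ∈ Ioc (s i) u', f (Gfun n s i x) ≤ (1+r)⁻¹ := by
    intro x hx
    have hxa : x ≤ a i := hx.2.trans hu2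
    have hopt' := hopt x ⟨hx.1.le, hx.2⟩
    have hdiff := obj_update_sub (s := s) r h hfC hM hs i hsi.1 hx.1.le hxa
    rw [Function.update_eq_self] at hdiff
    have hb : (x - s i) * f (Gfun n s i x) ≤ ∫ u in (s i)..x, f (Gfun n s i u) := by
      have hmono := intervalIntegral.integral_mono_on (f := fun _ => f (Gfun n s i x))
        hx.1.le intervalIntegrable_const (fG_intble hfC hM hs i hx.1.le hsi.1 hxa)
        (fun u hu'' => hfA (Gfun_mem hM hs i ⟨hsi.1.trans hu''.1, hu''.2.trans hxa⟩)
          (Gfun_mem hM hs i ⟨hsi.1.trans hx.1.le, hxa⟩) (Gfun_mono s i hu''.2))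
      rwa [intervalIntegral.integral_const, smul_eq_mul] at hmono
    have hxs : 0 < x - s i := sub_pos.mpr hx.1
    have h3 : (1+r) * ((x - s i) * f (Gfun n s i x)) ≤ x - s i := by
      have h4 := mul_le_mul_of_nonneg_left hb hr1.le
      linarith
    have h2 : (1+r) * f (Gfun n s i x) ≤ 1 := by nlinarith
    rw [inv_eq_one_div, le_div_iff₀ hr1]
    linarith
  have hcont : ContinuousWithinAt (fun u => f (Gfun n s i u)) (Ioc (s i) u') (s i) :=
    ((fG_contOn hfC hM hs i).continuousWithinAt ⟨hsi.1, hsi.2⟩).mono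
      (fun u hu'' => ⟨hsi.1.trans hu''.1.le, hu''.2.trans hu2⟩)
  have hne : (nhdsWithin (s i) (Ioc (s i) u')).NeBot := by
    apply mem_closure_iff_nhdsWithin_neBot.mp
    rw [closure_Ioc hu.ne]
    exact ⟨le_rfl, hu.le⟩
  have hfin := le_of_tendsto hcont (Filter.eventually_of_mem self_mem_nhdsWithin key)
  simp only [show (fun u => f (Gfun n s i u)) (s i) = f (Gfun n s i (s i)) from rfl] at hfin
  rwa [Gfun_self] at hfin

lemma nec_below (hr : 0 ≤ r) (hfC : ContinuousOn f (Icc 0 M))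
    (hfA : AntitoneOn f (Icc 0 M)) (hM : ∑ j, a j ≤ M)
    {s : Fin n → ℝ} (hs : ∀ j, s j ∈ Icc 0 (a j)) (i : Fin n)
    {l : ℝ} (hl : 0 ≤ l) (hls : l < s i)
    (hopt : ∀ x ∈ Icc l (s i),
      obj n r h (lob n f) i s ≤ obj n r h (lob n f) i (Function.update s i x)) :
    (1+r)⁻¹ ≤ f (Vfun n s (s i)) := by
  have hr1 : (0:ℝ) < 1 + r := by linarith
  have hsi := hs i
  have key : ∀ x ∈ Ico l (s i), (1+r)⁻¹ ≤ f (Gfun n s i x) := by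
    intro x hx
    have hx0 : 0 ≤ x := hl.trans hx.1
    have hopt' := hopt x ⟨hx.1, hx.2.le⟩
    have hdiff := obj_update_sub (s := s) r h hfC hM hs i hx0 hx.2.le hsi.2
    rw [Function.update_eq_self] at hdiff
    have hb : ∫ u in x..(s i), f (Gfun n s i u) ≤ (s i - x) * f (Gfun n s i x) := by
      have hmono := intervalIntegral.integral_mono_on (g := fun _ => f (Gfun n s i x))
        hx.2.le (fG_intble hfC hM hs i hx.2.le hx0 hsi.2) intervalIntegrable_const
        (fun u hu'' => hfA (Gfun_mem hM hs i ⟨hx0, (hx.2.le).trans hsi.2⟩)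
          (Gfun_mem hM hs i ⟨hx0.trans hu''.1, hu''.2.trans hsi.2⟩) (Gfun_mono s i hu''.1))
      rwa [intervalIntegral.integral_const, smul_eq_mul] at hmono
    have hxs : 0 < s i - x := sub_pos.mpr hx.2
    have h3 : s i - x ≤ (1+r) * ((s i - x) * f (Gfun n s i x)) := by
      have h4 := mul_le_mul_of_nonneg_left hb hr1.le
      linarith
    have h2 : 1 ≤ (1+r) * f (Gfun n s i x) := by nlinarith
    rw [inv_eq_one_div, div_le_iff₀ hr1]
    linarith
  have hcont : ContinuousWithinAt (fun u => f (Gfun n s i u)) (Ico l (s i)) (s i) :=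
    ((fG_contOn hfC hM hs i).continuousWithinAt ⟨hsi.1, hsi.2⟩).mono
      (fun u hu'' => ⟨hl.trans hu''.1, hu''.2.le.trans hsi.2⟩)
  have hne : (nhdsWithin (s i) (Ico l (s i))).NeBot := by
    apply mem_closure_iff_nhdsWithin_neBot.mp
    rw [closure_Ico hls.ne]
    exact ⟨hls.le, le_rfl⟩
  have hfin := ge_of_tendsto hcont (Filter.eventually_of_mem self_mem_nhdsWithin key)
  simp only [show (fun u => f (Gfun n s i u)) (s i) = f (Gfun n s i (s i)) from rfl] at hfin
  rwa [Gfun_self] at hfin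

def Lb (n : ℕ) (a h : Fin n → ℝ) (q : ℝ) (qb : Fin n → ℝ) (i : Fin n) : ℝ :=
  max 0 ((h i - a i * q) / (qb i - q))

def Ub (n : ℕ) (a h : Fin n → ℝ) (qb : Fin n → ℝ) (i : Fin n) : ℝ :=
  min (a i) (h i / qb i)

def Ubhat (n : ℕ) (a h : Fin n → ℝ) (qb : Fin n → ℝ) (i : Fin n) : ℝ :=
  if h i ≤ a i * qb i then Ub n a h qb i else a i

def shat (n : ℕ) (a h : Fin n → ℝ) (q : ℝ) (qb : Fin n → ℝ) (t : ℝ) (i : Fin n) : ℝ :=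
  if h i ≤ a i * qb i then max (Lb n a h q qb i) (min t (Ub n a h qb i)) else a i

lemma feas_iff (a h : Fin n → ℝ) (q : ℝ) (qb : Fin n → ℝ) (i : Fin n) (x : ℝ) :
    feasP2 n a h q qb i x ↔ x ∈ Icc (Lb n a h q qb i) (Ub n a h qb i) := by
  simp only [feasP2, Lb, Ub, Set.mem_Icc, max_le_iff, le_min_iff]
  tauto

/-- under LOB pricing and Assumption 2, for every fixed price vector
`(q, q̄) ∈ Q̂` there exists a unique Nash equilibrium liquidation vector in `D`. -/
theorem lob_unique_equilibrium_at_fixed_prices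
    (n : ℕ) (a h : Fin n → ℝ) (r M : ℝ) (f : ℝ → ℝ)
    (ha : ∀ i, 0 < a i) (hh : ∀ i, 0 < h i) (hr : 0 ≤ r)
    (hM : ∑ i, a i ≤ M)
    (hf : Assumption2 M f)
    (q : ℝ) (qb : Fin n → ℝ)
    (hq : q ∈ Set.Ioc (0 : ℝ) 1) (hqb : ∀ i, qb i ∈ Set.Ioc (0 : ℝ) 1)
    (hlt : ∀ i, q < qb i) :
    ∃! s : Fin n → ℝ, memD n a s ∧ NashP2 n a h r q qb (lob n f) s := by
  have hr1 : (0:ℝ) < 1 + r := by linarith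
  have hM0 : (0:ℝ) ≤ M := le_trans (Finset.sum_nonneg fun j _ => (ha j).le) hM
  have hfC : ContinuousOn f (Icc 0 M) := hf.smooth.continuousOn
  have hfA : AntitoneOn f (Icc 0 M) := hf.anti.antitoneOn
  have hρ1 : (1+r)⁻¹ ≤ 1 := by
    rw [inv_eq_one_div, div_le_one hr1]; linarith
  have hqbq : ∀ i, 0 < qb i - q := fun i => sub_pos.mpr (hlt i)
  have hLb0 : ∀ i, 0 ≤ Lb n a h q qb i := fun i => le_max_left _ _
  have hUba : ∀ i, Ub n a h qb i ≤ a i := fun i => min_le_left _ _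
  have hUb0 : ∀ i, 0 ≤ Ub n a h qb i := fun i =>
    le_min (ha i).le (div_nonneg (hh i).le (hqb i).1.le)
  have hLU : ∀ i, h i ≤ a i * qb i → Lb n a h q qb i ≤ Ub n a h qb i := by
    intro i hfe
    have h1 : (h i - a i * q) / (qb i - q) ≤ a i := by
      rw [div_le_iff₀ (hqbq i)]; nlinarith
    have h2 : (h i - a i * q) / (qb i - q) ≤ h i / qb i := by
      rw [div_le_div_iff₀ (hqbq i) (hqb i).1]
      nlinarith [mul_le_mul_of_nonneg_right hfe hq.1.le]
    exact max_le (hUb0 i) (le_min h1 h2)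
  have hUbhat0 : ∀ i, 0 ≤ Ubhat n a h qb i := by
    intro i; unfold Ubhat; split
    · exact hUb0 i
    · exact (ha i).le
  have hUbhata : ∀ i, Ubhat n a h qb i ≤ a i := by
    intro i; unfold Ubhat; split
    · exact hUba i
    · exact le_rfl
  have hshat_mem : ∀ t, memD n a (shat n a h q qb t) := by
    intro t i
    unfold shat; split
    · next hfe =>
      exact ⟨le_trans (hLb0 i) (le_max_left _ _),
        max_le ((hLU i hfe).trans (hUba i)) ((min_le_right _ _).trans (hUba i))⟩
    · exact ⟨(ha i).le, le_rfl⟩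
  have hVW : ∀ t, Vfun n (shat n a h q qb t) t = ∑ j, min (Ubhat n a h qb j) t := by
    intro t
    refine Finset.sum_congr rfl fun j _ => ?_
    by_cases hfe : h j ≤ a j * qb j
    · simp only [shat, Ubhat, if_pos hfe]
      have hLUj := hLU j hfe
      rcases le_total t (Lb n a h q qb j) with h1 | h1
      · rw [min_eq_right (h1.trans (le_max_left _ _)), min_eq_right (h1.trans hLUj)]
      · rcases le_total t (Ub n a h qb j) with h2 | h2
        · rw [min_eq_left h2, max_eq_right h1, min_self, min_eq_right h2]
        · rw [min_eq_right h2, max_eq_right hLUj]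
    · simp only [shat, Ubhat, if_neg hfe]
  -- necessary conditions at any Nash equilibrium
  have keyA : ∀ s : Fin n → ℝ, memD n a s → NashP2 n a h r q qb (lob n f) s →
      ∀ i, h i ≤ a i * qb i → s i < Ub n a h qb i → f (Vfun n s (s i)) ≤ (1+r)⁻¹ := by
    intro s hm hn i hfe hlt'
    have hN := (hn i).1 hfe
    have hsIcc := (feas_iff a h q qb i (s i)).mp hN.1
    exact nec_above hr hfC hfA hM hm i hlt' (hUba i)
      (fun x hx => hN.2 x ((feas_iff a h q qb i x).mpr ⟨hsIcc.1.trans hx.1, hx.2⟩))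
  have keyB : ∀ s : Fin n → ℝ, memD n a s → NashP2 n a h r q qb (lob n f) s →
      ∀ i, h i ≤ a i * qb i → Lb n a h q qb i < s i → (1+r)⁻¹ ≤ f (Vfun n s (s i)) := by
    intro s hm hn i hfe hlt'
    have hN := (hn i).1 hfe
    have hsIcc := (feas_iff a h q qb i (s i)).mp hN.1
    exact nec_below hr hfC hfA hM hm i (hLb0 i) hlt'
      (fun x hx => hN.2 x ((feas_iff a h q qb i x).mpr ⟨hx.1, hx.2.trans hsIcc.2⟩))
  have hord : ∀ s : Fin n → ℝ, memD n a s → ∀ j k : Fin n,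
      (1+r)⁻¹ ≤ f (Vfun n s (s j)) → f (Vfun n s (s k)) ≤ (1+r)⁻¹ → s j ≤ s k := by
    intro s hm j k hj hk
    by_contra hc
    push_neg at hc
    have hVV : Vfun n s (s j) ≤ Vfun n s (s k) :=
      (hf.anti.le_iff_ge (Vfun_mem hM hm (hm k).1) (Vfun_mem hM hm (hm j).1)).mp (hk.trans hj)
    have hlt2 : Vfun n s (s k) < Vfun n s (s j) := by
      simp only [Vfun]
      refine Finset.sum_lt_sum (fun l _ => min_le_min le_rfl hc.le) ⟨j, Finset.mem_univ j, ?_⟩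
      rw [min_self]
      exact lt_of_le_of_lt (min_le_right _ _) hc
    linarith
  have feas_of : ∀ s s' : Fin n → ℝ, NashP2 n a h r q qb (lob n f) s →
      NashP2 n a h r q qb (lob n f) s' → ∀ i, s i ≠ s' i → h i ≤ a i * qb i := by
    intro s s' hn hn' i hne
    by_contra hcc
    push_neg at hcc
    exact hne (((hn i).2 hcc).trans ((hn' i).2 hcc).symm)
  have hcomp : ∀ s s' : Fin n → ℝ, memD n a s → NashP2 n a h r q qb (lob n f) s →
      memD n a s' → NashP2 n a h r q qb (lob n f) s' →
      (∀ j, s j ≤ s' j) ∨ (∀ j, s' j ≤ s j) := by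
    intro s s' hm hn hm' hn'
    by_contra hcc
    push_neg at hcc
    obtain ⟨⟨j, hj⟩, ⟨k, hk⟩⟩ := hcc
    have hfej : h j ≤ a j * qb j := feas_of s s' hn hn' j hj.ne'
    have hfek : h k ≤ a k * qb k := feas_of s s' hn hn' k hk.ne
    have hsj := (feas_iff a h q qb j (s j)).mp ((hn j).1 hfej).1
    have hsk := (feas_iff a h q qb k (s k)).mp ((hn k).1 hfek).1
    have hs'j := (feas_iff a h q qb j (s' j)).mp ((hn' j).1 hfej).1
    have hs'k := (feas_iff a h q qb k (s' k)).mp ((hn' k).1 hfek).1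
    have h1 : f (Vfun n s (s k)) ≤ (1+r)⁻¹ := keyA s hm hn k hfek (lt_of_lt_of_le hk hs'k.2)
    have h2 : (1+r)⁻¹ ≤ f (Vfun n s (s j)) := keyB s hm hn j hfej (lt_of_le_of_lt hs'j.1 hj)
    have h3 : s j ≤ s k := hord s hm j k h2 h1
    have h4 : f (Vfun n s' (s' j)) ≤ (1+r)⁻¹ := keyA s' hm' hn' j hfej (lt_of_lt_of_le hj hsj.2)
    have h5 : (1+r)⁻¹ ≤ f (Vfun n s' (s' k)) := keyB s' hm' hn' k hfek (lt_of_le_of_lt hsk.1 hk)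
    have h6 : s' k ≤ s' j := hord s' hm' k j h5 h4
    linarith
  have huniq : ∀ s s' : Fin n → ℝ, memD n a s → NashP2 n a h r q qb (lob n f) s →
      memD n a s' → NashP2 n a h r q qb (lob n f) s' → (∀ j, s j ≤ s' j) → s = s' := by
    intro s s' hm hn hm' hn' hle
    funext i
    by_contra hne
    have hlt' : s i < s' i := lt_of_le_of_ne (hle i) hne
    have hfe := feas_of s s' hn hn' i hne
    have hsIcc := (feas_iff a h q qb i (s i)).mp ((hn i).1 hfe).1
    have hs'Icc := (feas_iff a h q qb i (s' i)).mp ((hn' i).1 hfe).1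
    have h1 : f (Vfun n s (s i)) ≤ (1+r)⁻¹ := keyA s hm hn i hfe (lt_of_lt_of_le hlt' hs'Icc.2)
    have h2 : (1+r)⁻¹ ≤ f (Vfun n s' (s' i)) := keyB s' hm' hn' i hfe (lt_of_le_of_lt hsIcc.1 hlt')
    have h3 : Vfun n s' (s' i) ≤ Vfun n s (s i) :=
      (hf.anti.le_iff_ge (Vfun_mem hM hm (hm i).1) (Vfun_mem hM hm' (hm' i).1)).mp (h1.trans h2)
    have h4 : Vfun n s (s i) < Vfun n s' (s' i) := by
      simp only [Vfun]
      refine Finset.sum_lt_sum (fun l _ => min_le_min (hle l) hlt'.le) ⟨i, Finset.mem_univ i, ?_⟩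
      rw [min_self, min_self]
      exact hlt'
    linarith
  -- existence: find the threshold t
  obtain ⟨t, ht0, hge, halt⟩ :
      ∃ t : ℝ, 0 ≤ t ∧ (1+r)⁻¹ ≤ f (∑ j, min (Ubhat n a h qb j) t) ∧
        (f (∑ j, min (Ubhat n a h qb j) t) = (1+r)⁻¹ ∨ ∀ i, Ub n a h qb i ≤ t) := by
    rcases le_or_gt ((1+r)⁻¹) (f (∑ j, min (Ubhat n a h qb j) M)) with hcase | hcase
    · exact ⟨M, hM0, hcase, Or.inr fun i => (hUba i).trans
        (le_trans (Finset.single_le_sum (fun j _ => (ha j).le) (Finset.mem_univ i)) hM)⟩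
    · have hWcont : Continuous (fun t : ℝ => ∑ j, min (Ubhat n a h qb j) t) :=
        continuous_finset_sum _ fun j _ => continuous_const.min continuous_id
      have hWmem : ∀ t ∈ Icc (0:ℝ) M, (∑ j, min (Ubhat n a h qb j) t) ∈ Icc (0:ℝ) M := by
        intro t ht
        refine ⟨Finset.sum_nonneg fun j _ => le_min (hUbhat0 j) ht.1, ?_⟩
        exact le_trans (Finset.sum_le_sum fun j _ => (min_le_left _ _).trans (hUbhata j)) hM
      have hc : ContinuousOn (fun t => f (∑ j, min (Ubhat n a h qb j) t)) (Icc 0 M) :=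
        hfC.comp hWcont.continuousOn hWmem
      have hmemI : (1+r)⁻¹ ∈ Icc (f (∑ j, min (Ubhat n a h qb j) M))
          (f (∑ j, min (Ubhat n a h qb j) 0)) := by
        refine ⟨hcase.le, ?_⟩
        have hz : (∑ j, min (Ubhat n a h qb j) 0) = 0 :=
          Finset.sum_eq_zero fun j _ => min_eq_right (hUbhat0 j)
        rw [hz, hf.f_zero]
        exact hρ1
      obtain ⟨t, htmem, hft⟩ := intermediate_value_Icc' hM0 hc hmemI
      exact ⟨t, htmem.1, hft.ge, Or.inl hft⟩
  -- the candidate equilibrium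
  have hnash : NashP2 n a h r q qb (lob n f) (shat n a h q qb t) := by
    intro i
    constructor
    · intro hfe
      have hLUi := hLU i hfe
      have hσdef : shat n a h q qb t i = max (Lb n a h q qb i) (min t (Ub n a h qb i)) := by
        unfold shat; rw [if_pos hfe]
      have hσIcc : shat n a h q qb t i ∈ Icc (Lb n a h q qb i) (Ub n a h qb i) := by
        rw [hσdef]; exact ⟨le_max_left _ _, max_le hLUi (min_le_right _ _)⟩
      refine ⟨(feas_iff a h q qb i _).mpr hσIcc, ?_⟩
      intro x hxf
      have hxIcc := (feas_iff a h q qb i x).mp hxf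
      have hx0 : 0 ≤ x := (hLb0 i).trans hxIcc.1
      have htriv : x = shat n a h q qb t i →
          obj n r h (lob n f) i (shat n a h q qb t)
            ≤ obj n r h (lob n f) i (Function.update (shat n a h q qb t) i x) := by
        intro hx; rw [hx, Function.update_eq_self]
      rcases le_total x (shat n a h q qb t i) with hxσ | hxσ
      · rcases le_or_gt (shat n a h q qb t i) t with hσt | hσt
        · refine opt_below hr hfC hfA hM (hshat_mem t) i ?_ hx0 hxσ
          have hV1 : Vfun n (shat n a h q qb t) (shat n a h q qb t i)
              ≤ ∑ j, min (Ubhat n a h qb j) t := by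
            rw [← hVW t]; exact Vfun_mono _ hσt
          refine le_trans hge (hfA ?_ ?_ hV1)
          · exact Vfun_mem hM (hshat_mem t) ((hshat_mem t i).1)
          · rw [← hVW t]; exact Vfun_mem hM (hshat_mem t) ht0
        · have hσL : shat n a h q qb t i = Lb n a h q qb i := by
            rcases max_choice (Lb n a h q qb i) (min t (Ub n a h qb i)) with hmc | hmc
            · rw [hσdef, hmc]
            · exfalso
              rw [hσdef, hmc] at hσt
              exact absurd hσt (not_lt.mpr (min_le_left _ _))
          exact htriv (le_antisymm hxσ (hσL.le.trans hxIcc.1))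
      · rcases le_or_gt t (shat n a h q qb t i) with htσ | htσ
        · rcases halt with hcA | hcB
          · refine opt_above hr hfC hfA hM (hshat_mem t) i ?_ hxσ (hxIcc.2.trans (hUba i))
            have hV1 : (∑ j, min (Ubhat n a h qb j) t)
                ≤ Vfun n (shat n a h q qb t) (shat n a h q qb t i) := by
              rw [← hVW t]; exact Vfun_mono _ htσ
            refine le_trans (hfA ?_ ?_ hV1) hcA.le
            · rw [← hVW t]; exact Vfun_mem hM (hshat_mem t) ht0
            · exact Vfun_mem hM (hshat_mem t) ((hshat_mem t i).1)
          · exact htriv (le_antisymm (hxIcc.2.trans ((hcB i).trans htσ)) hxσ)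
        · have hσU : shat n a h q qb t i = Ub n a h qb i := by
            rcases min_choice t (Ub n a h qb i) with hmc | hmc
            · exfalso
              rw [hσdef, hmc] at htσ
              exact absurd htσ (not_lt.mpr (le_max_right _ _))
            · rw [hσdef, hmc]; exact max_eq_right hLUi
          exact htriv (le_antisymm (hxIcc.2.trans hσU.ge) hxσ)
    · intro hcc
      unfold shat; rw [if_neg (not_le.mpr hcc)]
  refine ⟨shat n a h q qb t, ⟨hshat_mem t, hnash⟩, ?_⟩
  intro y hy
  rcases hcomp y (shat n a h q qb t) hy.1 hy.2 (hshat_mem t) hnash with hle | hle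
  · exact huniq y _ hy.1 hy.2 (hshat_mem t) hnash hle
  · exact (huniq _ y (hshat_mem t) hnash hy.1 hy.2 hle).symm
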